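/- Let (U, 𝒮) be a laminar set system, let S be a set of non-singleton members of 𝒮, and let (π, σ) be a pair of injections from S to U identifying S with unique request. Then for each a ∈ π(S), the member s = π⁻¹(a) of S is the least ancestor of a belonging to S; that is, a ∈ s and every s′ ∈ S with a ∈ s′ satisfies s ⊆ s′. -/
import Mathlib


variable {α : Type*} [DecidableEq α] [Fintype α]

/-- A set system on the finite universe `α`: `∅ ∉ 𝒮`, `univ ∈ 𝒮`, all singletons in `𝒮`. -/
def IsSetSystem (𝒮 : Finset (Finset α)) : Prop :=
  (∅ : Finset α) ∉ 𝒮 ∧ Finset.univ ∈ 𝒮 ∧ ∀ a : α, ({a} : Finset α) ∈ 𝒮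

/-- Two sets overlap: non-disjoint and neither contains the other. -/
def Overlap (X Y : Finset α) : Prop :=
  (X ∩ Y).Nonempty ∧ ¬ X ⊆ Y ∧ ¬ Y ⊆ X

/-- A set system is laminar when no two members overlap. -/
def IsLaminar (𝒮 : Finset (Finset α)) : Prop :=
  ∀ X ∈ 𝒮, ∀ Y ∈ 𝒮, ¬ Overlap X Y

/-- `c` is a child of `x` in the laminar tree: a ⊆-maximal proper subset of `x` in `𝒮`. -/
def IsChild (𝒮 : Finset (Finset α)) (c x : Finset α) : Prop :=
  c ∈ 𝒮 ∧ c ⊂ x ∧ ∀ y ∈ 𝒮, y ⊂ x → c ⊆ y → y = c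

/-- `p` is the parent of `x`: the ⊆-minimal member of `𝒮` properly containing `x`. -/
def IsParent (𝒮 : Finset (Finset α)) (p x : Finset α) : Prop :=
  p ∈ 𝒮 ∧ x ⊂ p ∧ ∀ y ∈ 𝒮, x ⊂ y → p ⊆ y

/-- `(π, σ)` identifies `S`: a pair of injections on `S` such that each `s ∈ S` is the
⊆-minimal member of `𝒮` containing both `π s` and `σ s`. -/
def Identifies (𝒮 S : Finset (Finset α)) (π σ : Finset α → α) : Prop :=
  Set.InjOn π ↑S ∧ Set.InjOn σ ↑S ∧
  ∀ s ∈ S, π s ∈ s ∧ σ s ∈ s ∧ ∀ y ∈ 𝒮, π s ∈ y → σ s ∈ y → s ⊆ y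

/-- `x` is `s`-requested in `(π, σ)` (for `s ∈ S`): `x ⊆ s` and `π s ∈ x` or `σ s ∈ x`. -/
def Requested (S : Finset (Finset α)) (π σ : Finset α → α) (s x : Finset α) : Prop :=
  s ∈ S ∧ x ⊆ s ∧ (π s ∈ x ∨ σ s ∈ x)

/-- `(π, σ)` has unique request: every member of `𝒮` is `s`-requested for at most one `s ∈ S`. -/
def UniqueRequest (𝒮 S : Finset (Finset α)) (π σ : Finset α → α) : Prop :=
  ∀ x ∈ 𝒮, ∀ s s' : Finset α,
    Requested S π σ s x → Requested S π σ s' x → s = s'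

/-- The bi-colouring `(A, B)` (disjoint, equal cardinality) identifies `S`. -/
def BicolIdentifies (𝒮 S : Finset (Finset α)) (A B : Finset α) : Prop :=
  Disjoint A B ∧ A.card = B.card ∧
  ∃ π σ : Finset α → α, Identifies 𝒮 S π σ ∧ UniqueRequest 𝒮 S π σ ∧
    S.image π = A ∧ S.image σ = B

/-- `X` is a thin set of inner nodes: for every non-root `x ∈ X`, the parent of `x` is not
in `X` and `x` has a sibling not in `X`. -/
def Thin (𝒮 X : Finset (Finset α)) : Prop :=
  ∀ x ∈ X, x ≠ Finset.univ →
    (∀ p : Finset α, IsParent 𝒮 p x → p ∉ X) ∧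
    ∃ y p : Finset α, y ≠ x ∧ IsChild 𝒮 x p ∧ IsChild 𝒮 y p ∧ y ∉ X

/-- If `(π, σ)` identifies `S` with unique request, then for each `s ∈ S`, `s` is the least
member of `S` containing `π s` (the least ancestor of `π s` that belongs to `S`). -/
theorem stmt_5 (𝒮 : Finset (Finset α)) (hsys : IsSetSystem 𝒮) (hlam : IsLaminar 𝒮)
    (S : Finset (Finset α)) (hS : ∀ x ∈ S, x ∈ 𝒮 ∧ ∀ a : α, x ≠ {a})
    (π σ : Finset α → α) (hid : Identifies 𝒮 S π σ) (hur : UniqueRequest 𝒮 S π σ) :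
    ∀ s ∈ S, π s ∈ s ∧ ∀ s' ∈ S, π s ∈ s' → s ⊆ s' := by
  obtain ⟨hπ, hσ, hmin⟩ := hid
  intro s hs
  obtain ⟨hπs, hσs, _⟩ := hmin s hs
  refine ⟨hπs, fun s' hs' hmem => ?_⟩
  obtain ⟨hs'𝒮, _⟩ := hS s' hs'
  obtain ⟨hs𝒮, _⟩ := hS s hs
  by_cases hsub : s ⊆ s'
  · exact hsub
  · -- laminarity: since π s ∈ s ∩ s', s' ⊆ s
    have hnov := hlam s hs𝒮 s' hs'𝒮
    have hs's : s' ⊆ s := by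
      by_contra h
      exact hnov ⟨⟨π s, Finset.mem_inter.2 ⟨hπs, hmem⟩⟩, hsub, h⟩
    -- s' is both s-requested and s'-requested, so s = s'
    obtain ⟨hπs', _, _⟩ := hmin s' hs'
    have := hur s' hs'𝒮 s s' ⟨hs, hs's, Or.inl hmem⟩ ⟨hs', subset_rfl, Or.inl hπs'⟩
    exact this ▸ subset_rfl
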